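/- Let m : [0,1) → ℝ be strictly decreasing and satisfy m((x+y)/(1+xy)) = m(x)·m(y) for all x, y ∈ [0,1). Then there exists a constant ξ > 0 such that m(x) = ((1-x)/(1+x))^ξ for all x ∈ [0,1). -/

import Mathlib

lemma lin_of_add_mono (f : ℝ → ℝ) (hadd : ∀ a b, f (a + b) = f a + f b)
    (hmono : Monotone f) : ∀ x, f x = x * f 1 := by
  set F : ℝ →+ ℝ := AddMonoidHom.mk' f hadd with hF
  have hrat : ∀ q : ℚ, f (q : ℝ) = (q : ℝ) * f 1 := by
    intro q
    have := map_rat_smul F q (1 : ℝ)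
    simpa [hF, smul_eq_mul, Rat.smul_def] using this
  have h0 : f 0 = 0 := by have := hadd 0 0; rw [add_zero] at this; linarith
  have hf1 : 0 ≤ f 1 := by
    have := hmono (zero_le_one : (0:ℝ) ≤ 1); linarith [h0 ▸ this]
  have hle : ∀ x : ℝ, f x ≤ x * f 1 := by
    intro x
    refine le_of_forall_pos_le_add ?_
    intro ε hε
    have hd : (0:ℝ) < ε / (f 1 + 1) := by positivity
    obtain ⟨q, hq1, hq2⟩ := exists_rat_btwn (lt_add_of_pos_right x hd)
    have h1 : f x ≤ f q := hmono hq1.le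
    rw [hrat q] at h1
    have h2 : (q : ℝ) * f 1 ≤ (x + ε / (f 1 + 1)) * f 1 :=
      mul_le_mul_of_nonneg_right hq2.le hf1
    have h3 : (x + ε / (f 1 + 1)) * f 1 ≤ x * f 1 + ε := by
      have : ε / (f 1 + 1) * f 1 ≤ ε := by
        rw [div_mul_eq_mul_div, div_le_iff₀ (by linarith)]
        nlinarith
      nlinarith
    linarith
  intro x
  have h1 := hle x
  have h2 := hle (-x)
  have h3 : f (-x) = -f x := by have := hadd x (-x); simp at this; linarith
  rw [h3] at h2
  nlinarith

theorem stmt_0 (m : ℝ → ℝ)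
    (hanti : StrictAntiOn m (Set.Ico (0:ℝ) 1))
    (hfe : ∀ x ∈ Set.Ico (0:ℝ) 1, ∀ y ∈ Set.Ico (0:ℝ) 1,
      m ((x + y) / (1 + x * y)) = m x * m y) :
    ∃ ξ : ℝ, 0 < ξ ∧ ∀ x ∈ Set.Ico (0:ℝ) 1, m x = ((1 - x) / (1 + x)) ^ ξ := by
  have h0mem : (0:ℝ) ∈ Set.Ico (0:ℝ) 1 := by constructor <;> norm_num
  have hhalf : (1/2 : ℝ) ∈ Set.Ico (0:ℝ) 1 := by constructor <;> norm_num
  -- m 0 = 1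
  have hm0 : m 0 = 1 := by
    have h := hfe 0 h0mem 0 h0mem
    norm_num at h
    have h2 : m 0 * (m 0 - 1) = 0 := by nlinarith
    rcases mul_eq_zero.mp h2 with h1 | h1
    · exfalso
      have hx := hfe (1/2) hhalf 0 h0mem
      norm_num at hx
      rw [h1, mul_zero] at hx
      have := hanti h0mem hhalf (by norm_num)
      rw [h1, hx] at this
      exact lt_irrefl 0 this
    · linarith
  -- the substitution map
  set φ : ℝ → ℝ := fun u => (1 - Real.exp (-u)) / (1 + Real.exp (-u)) with hφdef
  have hexp_pos : ∀ u : ℝ, 0 < Real.exp (-u) := fun u => Real.exp_pos _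
  have hexp_le : ∀ u : ℝ, 0 ≤ u → Real.exp (-u) ≤ 1 := by
    intro u hu
    rw [Real.exp_le_one_iff]
    linarith
  have hmem : ∀ u : ℝ, 0 ≤ u → φ u ∈ Set.Ico (0:ℝ) 1 := by
    intro u hu
    constructor
    · apply div_nonneg
      · linarith [hexp_le u hu]
      · linarith [hexp_pos u]
    · rw [div_lt_one (by linarith [hexp_pos u])]
      linarith [hexp_pos u]
  have hφ0 : φ 0 = 0 := by simp [hφdef]
  have hφmono : ∀ u v : ℝ, 0 ≤ u → u < v → φ u < φ v := by
    intro u v hu huv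
    have h1 := hexp_pos u
    have h2 := hexp_pos v
    have h3 : Real.exp (-v) < Real.exp (-u) := Real.exp_lt_exp.mpr (by linarith)
    rw [hφdef]
    rw [div_lt_div_iff₀ (by linarith) (by linarith)]
    nlinarith
  set g : ℝ → ℝ := fun u => m (φ u) with hgdef
  have hg_fe : ∀ u v : ℝ, 0 ≤ u → 0 ≤ v → g (u + v) = g u * g v := by
    intro u v hu hv
    rw [hgdef]
    simp only
    rw [← hfe _ (hmem u hu) _ (hmem v hv)]
    congr 1
    rw [hφdef]
    simp only
    have hst : Real.exp (-(u + v)) = Real.exp (-u) * Real.exp (-v) := by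
      rw [← Real.exp_add]; ring_nf
    rw [hst]
    set s := Real.exp (-u)
    set t := Real.exp (-v)
    have hs := hexp_pos u
    have ht := hexp_pos v
    have hsle := hexp_le u hu
    have htle := hexp_le v hv
    have hd : (0:ℝ) < 1 + (1 - s) / (1 + s) * ((1 - t) / (1 + t)) := by
      have : 0 ≤ (1 - s) / (1 + s) * ((1 - t) / (1 + t)) := by
        apply mul_nonneg <;> apply div_nonneg <;> linarith
      linarith
    rw [div_eq_div_iff (by nlinarith) (by linarith)]
    have h1s : (1:ℝ) + s ≠ 0 := by positivity
    have h1t : (1:ℝ) + t ≠ 0 := by positivity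
    field_simp
    ring
  have hg0 : g 0 = 1 := by rw [hgdef]; simp only; rw [hφ0, hm0]
  have hganti : ∀ u v : ℝ, 0 ≤ u → u < v → g v < g u := by
    intro u v hu huv
    exact hanti (hmem u hu) (hmem v (by linarith)) (hφmono u v hu huv)
  have hgpos : ∀ u : ℝ, 0 ≤ u → 0 < g u := by
    intro u hu
    have hnn : 0 ≤ g u := by
      have h := hg_fe (u/2) (u/2) (by linarith) (by linarith)
      rw [show u/2 + u/2 = u by ring] at h
      rw [h]
      exact mul_self_nonneg _
    rcases hnn.lt_or_eq with h | h
    · exact h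
    · exfalso
      have hu0 : 0 < u := by
        rcases hu.lt_or_eq with h' | h'
        · exact h'
        · rw [← h'] at h; rw [hg0] at h; norm_num at h
      have h2u : g (2*u) = g u * g u := by
        have := hg_fe u u hu hu; rw [show u + u = 2*u by ring] at this; exact this
      have hlt := hganti u (2*u) hu (by linarith)
      rw [h2u, ← h] at hlt
      norm_num at hlt
  -- odd extension
  set F : ℝ → ℝ := fun u => if 0 ≤ u then -Real.log (g u) else Real.log (g (-u)) with hFdef
  have hFnn : ∀ u : ℝ, 0 ≤ u → F u = -Real.log (g u) := by
    intro u hu; rw [hFdef]; simp only [if_pos hu]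
  have hFneg : ∀ u : ℝ, u < 0 → F u = Real.log (g (-u)) := by
    intro u hu; rw [hFdef]; simp only [if_neg (not_le.mpr hu)]
  have haux : ∀ u v : ℝ, 0 ≤ u → 0 ≤ v →
      -Real.log (g (u + v)) = -Real.log (g u) + -Real.log (g v) := by
    intro u v hu hv
    rw [hg_fe u v hu hv, Real.log_mul (hgpos u hu).ne' (hgpos v hv).ne']
    ring
  have hFadd : ∀ a b : ℝ, F (a + b) = F a + F b := by
    intro a b
    rcases le_or_gt 0 a with ha | ha <;> rcases le_or_gt 0 b with hb | hb <;>
      rcases le_or_gt 0 (a + b) with hab | hab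
    · rw [hFnn _ ha, hFnn _ hb, hFnn _ hab, haux a b ha hb]
    · linarith
    · -- a ≥ 0, b < 0, a+b ≥ 0
      have h := haux (a + b) (-b) hab (by linarith)
      rw [show a + b + -b = a by ring] at h
      rw [hFnn _ ha, hFneg _ hb, hFnn _ hab]
      linarith
    · -- a ≥ 0, b < 0, a+b < 0
      have h := haux (-(a + b)) a (by linarith) ha
      rw [show -(a + b) + a = -b by ring] at h
      rw [hFnn _ ha, hFneg _ hb, hFneg _ hab]
      linarith
    · -- a < 0, b ≥ 0, a+b ≥ 0
      have h := haux (a + b) (-a) hab (by linarith)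
      rw [show a + b + -a = b by ring] at h
      rw [hFneg _ ha, hFnn _ hb, hFnn _ hab]
      linarith
    · -- a < 0, b ≥ 0, a+b < 0
      have h := haux (-(a + b)) b (by linarith) hb
      rw [show -(a + b) + b = -a by ring] at h
      rw [hFneg _ ha, hFnn _ hb, hFneg _ hab]
      linarith
    · linarith
    · -- a < 0, b < 0
      have h := haux (-a) (-b) (by linarith) (by linarith)
      rw [show -a + -b = -(a + b) by ring] at h
      rw [hFneg _ ha, hFneg _ hb, hFneg _ hab]
      linarith
  have hgle : ∀ u v : ℝ, 0 ≤ u → u ≤ v → g v ≤ g u := by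
    intro u v hu huv
    rcases huv.lt_or_eq with h | h
    · exact (hganti u v hu h).le
    · rw [h]
  have hgle1 : ∀ u : ℝ, 0 ≤ u → g u ≤ 1 := by
    intro u hu
    have := hgle 0 u le_rfl hu
    rwa [hg0] at this
  have hFmono : Monotone F := by
    intro u v huv
    rcases le_or_gt 0 u with hu | hu
    · rw [hFnn _ hu, hFnn _ (le_trans hu huv)]
      have := Real.log_le_log (hgpos v (le_trans hu huv)) (hgle u v hu huv)
      linarith
    · rcases le_or_gt 0 v with hv | hv
      · rw [hFneg _ hu, hFnn _ hv]
        have h1 : Real.log (g (-u)) ≤ 0 :=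
          Real.log_nonpos (hgpos (-u) (by linarith)).le (hgle1 (-u) (by linarith))
        have h2 : Real.log (g v) ≤ 0 :=
          Real.log_nonpos (hgpos v hv).le (hgle1 v hv)
        linarith
      · rw [hFneg _ hu, hFneg _ hv]
        exact Real.log_le_log (hgpos (-u) (by linarith))
          (hgle (-v) (-u) (by linarith) (by linarith))
  have hlin := lin_of_add_mono F hFadd hFmono
  set c : ℝ := F 1 with hcdef
  have hc : 0 < c := by
    rw [hcdef, hFnn 1 (by norm_num)]
    have h1 : g 1 < 1 := by
      have := hganti 0 1 le_rfl (by norm_num); rwa [hg0] at this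
    have := Real.log_neg (hgpos 1 (by norm_num)) h1
    linarith
  refine ⟨c, hc, ?_⟩
  intro x hx
  obtain ⟨hx0, hx1⟩ := hx
  set u : ℝ := Real.log ((1 + x) / (1 - x)) with hudef
  have hfrac_pos : (0:ℝ) < (1 + x) / (1 - x) := by
    apply div_pos <;> linarith
  have hu : 0 ≤ u := by
    rw [hudef]
    apply Real.log_nonneg
    rw [le_div_iff₀ (by linarith)]
    linarith
  have hexpu : Real.exp (-u) = (1 - x) / (1 + x) := by
    rw [hudef, ← Real.log_inv, Real.exp_log]
    · rw [inv_div]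
    · rw [inv_div]; apply div_pos <;> linarith
  have hφu : φ u = x := by
    rw [hφdef]
    simp only
    rw [hexpu]
    rw [div_eq_iff]
    · field_simp
      ring
    · have : (0:ℝ) < (1 - x) / (1 + x) := by apply div_pos <;> linarith
      linarith
  have hgu : g u = m x := by rw [hgdef]; simp only; rw [hφu]
  have hFu : F u = u * c := hlin u
  rw [hFnn u hu, hgu] at hFu
  have hmx : 0 < m x := by rw [← hgu]; exact hgpos u hu
  have hlogfr : Real.log ((1 - x) / (1 + x)) = -u := by
    rw [← hexpu, Real.log_exp]
  rw [Real.rpow_def_of_pos (by apply div_pos <;> linarith), hlogfr]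
  rw [← Real.exp_log hmx]
  congr 1
  linarith
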